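/- MinPop matching computes MaxMatch: let ␣ be a character not occurring in any vocabulary token, and extend the 'on-trie' predicate so that exactly the strings ε and ␣ among strings ending in ␣ are on the trie. Then for every string w over the original alphabet, M(w) = [UNK] if g(w␣) = none, and M(w) = G(w␣) otherwise. -/

import Mathlib

variable {α : Type*} [DecidableEq α]

/-- The longest nonempty prefix of `w` that belongs to `V` (or `[]` if none exists). -/
def maxPref (V : Finset (List α)) (w : List α) : List α :=
  ((w.inits.filter (fun p => decide (p ∈ V ∧ p ≠ []))).getLast?).getD []

/-- The suffix `q_w` of `w` obtained by removing the prefix `p_w`. -/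
def restSuffix (V : Finset (List α)) (w : List α) : List α :=
  w.drop (maxPref V w).length

/-- MaxMatch tokenization; `none` encodes the failure output `[UNK]`. -/
def maxMatch (V : Finset (List α)) (w : List α) : Option (List (List α)) :=
  if hw : w = [] then some []
  else if hp : maxPref V w = [] then none
  else
    match maxMatch V (w.drop (maxPref V w).length) with
    | none => none
    | some ts => some (maxPref V w :: ts)
  termination_by w.length
  decreasing_by
    simp only [List.length_drop]
    have h1 : 0 < (maxPref V w).length := List.length_pos_iff_ne_nil.mpr hp
    have h2 : 0 < w.length := List.length_pos_iff_ne_nil.mpr hw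
    omega

/-- `w` is "on the trie" built from `V`: it is `ε` or a prefix of a vocabulary token. -/
def OnTrie (V : Finset (List α)) (w : List α) : Prop :=
  w = [] ∨ ∃ t ∈ V, w <+: t

instance (V : Finset (List α)) (w : List α) : Decidable (OnTrie V w) := by
  unfold OnTrie; infer_instance

/-- MinPop matching: `(g w, G w)`. -/
def minPop (V : Finset (List α)) (w : List α) : Option (List α) × List (List α) :=
  if hT : OnTrie V w then (some w, [])
  else if hp : maxPref V w = [] then (none, [])
  else
    let r := minPop V (w.drop (maxPref V w).length)
    (r.1, maxPref V w :: r.2)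
  termination_by w.length
  decreasing_by
    simp only [List.length_drop]
    have hw : w ≠ [] := fun h => hT (Or.inl h)
    have h1 : 0 < (maxPref V w).length := List.length_pos_iff_ne_nil.mpr hp
    have h2 : 0 < w.length := List.length_pos_iff_ne_nil.mpr hw
    omega

/-- Failure link `f(u)`. -/
def fLink (V : Finset (List α)) (u : List α) : Option (List α) :=
  if maxPref V u = [] then none else (minPop V (restSuffix V u)).1

/-- Failure pops `F(u)`. -/
def fPops (V : Finset (List α)) (u : List α) : List (List α) :=
  if maxPref V u = [] then [] else maxPref V u :: (minPop V (restSuffix V u)).2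

/-- `w` is on the trie augmented with a fresh whitespace character `sp`:
exactly `ε`, `[sp]`, and the prefixes of vocabulary tokens are on it. -/
def OnTrieAug (V : Finset (List α)) (sp : α) (w : List α) : Prop :=
  w = [] ∨ w = [sp] ∨ ∃ t ∈ V, w <+: t

instance (V : Finset (List α)) (sp : α) (w : List α) : Decidable (OnTrieAug V sp w) := by
  unfold OnTrieAug; infer_instance

/-- MinPop matching on the augmented trie: `(g w, G w)`. -/
def minPopAug (V : Finset (List α)) (sp : α) (w : List α) :
    Option (List α) × List (List α) :=
  if hT : OnTrieAug V sp w then (some w, [])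
  else if hp : maxPref V w = [] then (none, [])
  else
    let r := minPopAug V sp (w.drop (maxPref V w).length)
    (r.1, maxPref V w :: r.2)
  termination_by w.length
  decreasing_by
    simp only [List.length_drop]
    have hw : w ≠ [] := fun h => hT (Or.inl h)
    have h1 : 0 < (maxPref V w).length := List.length_pos_iff_ne_nil.mpr hp
    have h2 : 0 < w.length := List.length_pos_iff_ne_nil.mpr hw
    omega

-- Auxiliary lemmas

lemma maxPref_spec {V : Finset (List α)} {w : List α} (h : maxPref V w ≠ []) :
    maxPref V w ∈ V ∧ maxPref V w <+: w := by
  unfold maxPref at h ⊢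
  cases hl : (w.inits.filter (fun p => decide (p ∈ V ∧ p ≠ []))).getLast? with
  | none => rw [hl] at h; simp at h
  | some p =>
    simp only [Option.getD_some]
    have hp : p ∈ w.inits.filter (fun p => decide (p ∈ V ∧ p ≠ [])) := by
      have hmem : p ∈ (w.inits.filter (fun p => decide (p ∈ V ∧ p ≠ []))).getLast? := hl
      obtain ⟨hne, hpe⟩ := List.mem_getLast?_eq_getLast hmem
      rw [hpe]; exact List.getLast_mem hne
    rw [List.mem_filter] at hp
    obtain ⟨h1, h2⟩ := hp
    simp only [decide_eq_true_eq] at h2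
    exact ⟨h2.1, (List.mem_inits _ _).mp h1⟩

lemma maxPref_append_sp (V : Finset (List α)) (sp : α) (hsp : ∀ t ∈ V, sp ∉ t)
    (w : List α) : maxPref V (w ++ [sp]) = maxPref V w := by
  unfold maxPref
  have : (w ++ [sp]).inits = w.inits ++ [w ++ [sp]] := by
    rw [List.inits_append]; simp
  rw [this, List.filter_append]
  have : (List.filter (fun p => decide (p ∈ V ∧ p ≠ [])) [w ++ [sp]]) = [] := by
    simp only [List.filter_cons, List.filter_nil, decide_eq_true_eq]
    rw [if_neg]
    rintro ⟨hmem, -⟩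
    exact hsp _ hmem (by simp)
  rw [this, List.append_nil]

theorem stmt9_aux (V : Finset (List α)) (sp : α) (hsp : ∀ t ∈ V, sp ∉ t)
    (w : List α) (hw : sp ∉ w) :
    ((minPopAug V sp (w ++ [sp])).1 = none → maxMatch V w = none) ∧
    (∀ u, (minPopAug V sp (w ++ [sp])).1 = some u →
      maxMatch V w = some (minPopAug V sp (w ++ [sp])).2) := by
  by_cases hw0 : w = []
  · subst hw0
    rw [show ([] : List α) ++ [sp] = [sp] by simp, minPopAug]
    rw [dif_pos (show OnTrieAug V sp [sp] from Or.inr (Or.inl rfl))]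
    simp [maxMatch]
  · have hmp : maxPref V (w ++ [sp]) = maxPref V w := maxPref_append_sp V sp hsp w
    have hnot : ¬ OnTrieAug V sp (w ++ [sp]) := by
      rintro (h | h | ⟨t, ht, hpre⟩)
      · simp at h
      · have := congrArg List.length h
        simp at this; exact hw0 this
      · exact hsp t ht (hpre.mem (by simp))
    rw [minPopAug, dif_neg hnot, hmp]
    by_cases hp : maxPref V w = []
    · rw [dif_pos hp, maxMatch, dif_neg hw0, dif_pos hp]
      exact ⟨fun _ => rfl, fun u h => by simp at h⟩
    · rw [dif_neg hp]
      obtain ⟨hpV, hppre⟩ := maxPref_spec hp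
      have hlen : (maxPref V w).length ≤ w.length := hppre.length_le
      have hdrop : (w ++ [sp]).drop (maxPref V w).length
          = w.drop (maxPref V w).length ++ [sp] := by
        rw [List.drop_append_of_le_length hlen]
      have hq : sp ∉ w.drop (maxPref V w).length :=
        fun h => hw (List.mem_of_mem_drop h)
      have hlt : (w.drop (maxPref V w).length).length < w.length := by
        have h1 : 0 < (maxPref V w).length := List.length_pos_iff_ne_nil.mpr hp
        have h2 : 0 < w.length := List.length_pos_iff_ne_nil.mpr hw0
        simp only [List.length_drop]; omega
      have IH := stmt9_aux V sp hsp (w.drop (maxPref V w).length) hq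
      rw [hdrop]
      rw [maxMatch, dif_neg hw0, dif_neg hp]
      constructor
      · intro h
        simp only [IH.1 h]
      · intro u h
        rw [IH.2 u h]
  termination_by w.length
  decreasing_by exact hlt


/-- MinPop matching on the augmented trie computes MaxMatch:
`M(w) = [UNK]` if `g(w␣) = none`, and `M(w) = G(w␣)` otherwise. -/
theorem stmt9 (V : Finset (List α)) (hV : ∀ t ∈ V, t ≠ [])
    (sp : α) (hsp : ∀ t ∈ V, sp ∉ t) (w : List α) (hw : sp ∉ w) :
    ((minPopAug V sp (w ++ [sp])).1 = none → maxMatch V w = none) ∧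
    (∀ u, (minPopAug V sp (w ++ [sp])).1 = some u →
      maxMatch V w = some (minPopAug V sp (w ++ [sp])).2) :=
  stmt9_aux V sp hsp w hw
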